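/- Let m ≥ 1 be an integer, let θ ∈ (0, 1/2], and let B be a binomial random variable with parameters m and 1/2 + θ. Define g(θ, m) = θ·(1 − θ²)^{(m−1)/2} if θ < 1/√m, and g(θ, m) = (1/√m)·(1 − 1/m)^{(m−1)/2} if θ ≥ 1/√m. Then P(B > m/2) − P(B < m/2) ≥ √(2m/π)·g(θ, m). -/

import Mathlib

open MeasureTheory

open Finset Real MeasureTheory

lemma wallis_W_le (N : ℕ) :
    (∏ i ∈ range N, ((2*(i:ℝ) + 2) / (2*i + 1) * ((2*i + 2) / (2*i + 3)))) ≤ π / 2 := by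
  have hmono : Monotone (fun N => ∏ i ∈ range N, ((2*(i:ℝ) + 2) / (2*i + 1) * ((2*i + 2) / (2*i + 3)))) := by
    apply monotone_nat_of_le_succ
    intro n
    rw [prod_range_succ]
    have h1 : (1:ℝ) ≤ (2*(n:ℝ) + 2) / (2*n + 1) * ((2*n + 2) / (2*n + 3)) := by
      rw [div_mul_div_comm, le_div_iff₀ (by positivity)]
      nlinarith [Nat.cast_nonneg (α := ℝ) n]
    have h2 : (0:ℝ) ≤ ∏ i ∈ range n, ((2*(i:ℝ) + 2) / (2*i + 1) * ((2*i + 2) / (2*i + 3))) := by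
      apply prod_nonneg; intro i _; positivity
    nlinarith
  exact hmono.ge_of_tendsto Real.tendsto_prod_pi_div_two N

lemma wallis_prod_eq (n : ℕ) :
    (∏ i ∈ range n, ((2*(i:ℝ) + 2) / (2*i + 1) * ((2*i + 2) / (2*i + 3))))
      * ((Nat.centralBinom n : ℝ) / 4 ^ n) ^ 2 * (2*n + 1) = 1 := by
  induction n with
  | zero => simp [Nat.centralBinom]
  | succ n ih =>
    have hC' : ((n:ℝ) + 1) * (Nat.centralBinom (n+1) : ℝ) = 2 * (2*n+1) * Nat.centralBinom n := by
      exact_mod_cast congrArg (Nat.cast (R := ℝ)) (Nat.succ_mul_centralBinom_succ n)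
    have hCpos : (0:ℝ) < Nat.centralBinom n := by
      exact_mod_cast Nat.centralBinom_pos n
    have hcb1 : (Nat.centralBinom (n+1) : ℝ) = 2 * (2*n+1) * Nat.centralBinom n / (n+1) := by
      field_simp at hC' ⊢; linarith
    have key : ((2*(n:ℝ) + 2) / (2*n + 1) * ((2*n + 2) / (2*n + 3)))
        * ((Nat.centralBinom (n+1) : ℝ) / 4 ^ (n+1)) ^ 2 * (2*(n+1) + 1)
        = ((Nat.centralBinom n : ℝ) / 4 ^ n) ^ 2 * (2*n + 1) := by
      rw [hcb1]
      have h1 : (2*(n:ℝ)+1) ≠ 0 := by positivity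
      have h2 : (2*(n:ℝ)+3) ≠ 0 := by positivity
      have h3 : ((n:ℝ)+1) ≠ 0 := by positivity
      have h4 : (4:ℝ)^n ≠ 0 := by positivity
      push_cast
      field_simp
      ring
    rw [prod_range_succ]
    push_cast at key ⊢
    calc (∏ i ∈ range n, ((2*(i:ℝ) + 2) / (2*i + 1) * ((2*i + 2) / (2*i + 3))))
          * ((2*(n:ℝ) + 2) / (2*n + 1) * ((2*n + 2) / (2*n + 3)))
          * ((Nat.centralBinom (n+1) : ℝ) / 4 ^ (n+1)) ^ 2 * (2*(n+1) + 1)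
        = (∏ i ∈ range n, ((2*(i:ℝ) + 2) / (2*i + 1) * ((2*i + 2) / (2*i + 3))))
          * (((2*(n:ℝ) + 2) / (2*n + 1) * ((2*n + 2) / (2*n + 3)))
            * ((Nat.centralBinom (n+1) : ℝ) / 4 ^ (n+1)) ^ 2 * (2*(n+1) + 1)) := by push_cast; ring
      _ = (∏ i ∈ range n, ((2*(i:ℝ) + 2) / (2*i + 1) * ((2*i + 2) / (2*i + 3))))
          * (((Nat.centralBinom n : ℝ) / 4 ^ n) ^ 2 * (2*n + 1)) := by rw [key]
      _ = 1 := by rw [← mul_assoc]; exact ih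

lemma centralBinom_lower (n : ℕ) :
    Real.sqrt (2 / (π * (2*n+1))) ≤ (Nat.centralBinom n : ℝ) / 4 ^ n := by
  have hW := wallis_W_le n
  have hE := wallis_prod_eq n
  have hpi := Real.pi_pos
  set W := (∏ i ∈ range n, ((2*(i:ℝ) + 2) / (2*i + 1) * ((2*i + 2) / (2*i + 3)))) with hWdef
  have hWpos : 0 < W := by
    apply prod_pos; intro i _; positivity
  set C := (Nat.centralBinom n : ℝ) / 4 ^ n with hCdef
  have hCpos : 0 < C := by
    have : (0:ℝ) < Nat.centralBinom n := by exact_mod_cast Nat.centralBinom_pos n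
    positivity
  have h21 : (0:ℝ) < 2*n+1 := by positivity
  -- C^2 = 1/(W*(2n+1)) ≥ 1/((π/2)*(2n+1)) = 2/(π(2n+1))
  have hsq : 2 / (π * (2*n+1)) ≤ C^2 := by
    have hC2 : C^2 = 1 / (W * (2*n+1)) := by field_simp; nlinarith [hE]
    rw [hC2]
    rw [div_le_div_iff₀ (by positivity) (by positivity)]
    nlinarith
  calc Real.sqrt (2 / (π * (2*n+1))) ≤ Real.sqrt (C^2) := Real.sqrt_le_sqrt hsq
    _ = C := by rw [Real.sqrt_sq hCpos.le]


noncomputable def bterm (m k : ℕ) (x : ℝ) : ℝ :=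
  (m.choose k : ℝ) * (1/2 + x)^k * (1/2 - x)^(m - k)

noncomputable def aterm (m j : ℕ) (x : ℝ) : ℝ :=
  ((m-1).choose j : ℝ) * (1/2 + x)^j * (1/2 - x)^(m - 1 - j)

noncomputable def Fgap (m : ℕ) (x : ℝ) : ℝ :=
  (∑ k ∈ Ico (m/2 + 1) (m+1), bterm m k x) - ∑ k ∈ range ((m+1)/2), bterm m k x

lemma hasDerivAt_p (k : ℕ) (x : ℝ) :
    HasDerivAt (fun x : ℝ => (1/2 + x)^k) (k * (1/2 + x)^(k-1)) x := by
  have h : HasDerivAt (fun x : ℝ => 1/2 + x) 1 x := (hasDerivAt_id x).const_add (1/2)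
  simpa using h.fun_pow k

lemma hasDerivAt_q (k : ℕ) (x : ℝ) :
    HasDerivAt (fun x : ℝ => (1/2 - x)^k) (-(k * (1/2 - x)^(k-1))) x := by
  have h : HasDerivAt (fun x : ℝ => 1/2 - x) (-1) x := (hasDerivAt_id x).const_sub (1/2)
  have := h.fun_pow k
  refine this.congr_deriv ?_
  ring

lemma deriv_bterm_succ (m j : ℕ) (h : j + 1 ≤ m) (x : ℝ) :
    HasDerivAt (bterm m (j+1)) ((m:ℝ) * (aterm m j x - aterm m (j+1) x)) x := by
  have h1 := hasDerivAt_p (j+1) x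
  have h2 := hasDerivAt_q (m - (j+1)) x
  have hd := (h1.fun_mul h2).const_mul ((m.choose (j+1) : ℝ))
  have hfun : bterm m (j+1) = fun y => (m.choose (j+1) : ℝ) * ((1/2 + y)^(j+1) * (1/2 - y)^(m - (j+1))) := by
    funext y; rw [bterm]; ring
  rw [hfun]
  refine hd.congr_deriv ?_
  symm
  -- value equality
  have hnc1 := Nat.add_one_mul_choose_eq (m-1) j
  have hm1 : m - 1 + 1 = m := by omega
  rw [hm1] at hnc1
  -- hnc1 : m * (m-1).choose j = m.choose (j+1) * (j+1)
  have c1' : (m:ℝ) * ((m-1).choose j : ℝ) = (m.choose (j+1) : ℝ) * ((j:ℝ)+1) := by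
    exact_mod_cast congrArg (Nat.cast (R := ℝ)) hnc1
  have hnc2 := Nat.choose_mul_succ_eq (m-1) (j+1)
  have hm2 : m - 1 + 1 = m := by omega
  rw [hm2] at hnc2
  -- hnc2 : (m-1).choose (j+1) * m = m.choose (j+1) * (m - (j+1))
  have c2' : ((m-1).choose (j+1) : ℝ) * (m:ℝ) = (m.choose (j+1) : ℝ) * ((m - (j+1) : ℕ) : ℝ) := by
    exact_mod_cast congrArg (Nat.cast (R := ℝ)) hnc2
  have e1 : m - 1 - j = m - (j+1) := by omega
  have e2 : m - 1 - (j+1) = m - (j+1) - 1 := by omega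
  rw [aterm, aterm, e1, e2]
  have e3 : j + 1 - 1 = j := by omega
  rw [e3]
  push_cast
  linear_combination ((1/2 + x)^j * (1/2 - x)^(m-(j+1))) * c1'
    - ((1/2 + x)^(j+1) * (1/2 - x)^(m-(j+1)-1)) * c2'

lemma deriv_bterm_zero (m : ℕ) (hm : 1 ≤ m) (x : ℝ) :
    HasDerivAt (bterm m 0) (-((m:ℝ) * aterm m 0 x)) x := by
  have h2 := hasDerivAt_q m x
  have hfun : bterm m 0 = fun y : ℝ => (1/2 - y)^m := by
    funext y; rw [bterm]; simp
  rw [hfun]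
  convert h2 using 1
  rw [aterm]
  simp

lemma hasDerivAt_Fgap (m : ℕ) (hm : 1 ≤ m) (x : ℝ) :
    HasDerivAt (Fgap m)
      ((m:ℝ) * (aterm m (m/2) x + aterm m ((m+1)/2 - 1) x)) x := by
  have hT : HasDerivAt (fun x => ∑ k ∈ Ico (m/2 + 1) (m+1), bterm m k x)
      ((m:ℝ) * aterm m (m/2) x) x := by
    have hsum : HasDerivAt (fun x => ∑ k ∈ Ico (m/2 + 1) (m+1), bterm m k x)
        (∑ k ∈ Ico (m/2 + 1) (m+1), (m:ℝ) * (aterm m (k-1) x - aterm m k x)) x := by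
      apply HasDerivAt.fun_sum
      intro k hk
      rw [mem_Ico] at hk
      have hk1 : k - 1 + 1 = k := by omega
      have := deriv_bterm_succ m (k-1) (by omega) x
      rw [hk1] at this
      exact this
    have hval : (∑ k ∈ Ico (m/2 + 1) (m+1), (m:ℝ) * (aterm m (k-1) x - aterm m k x))
        = (m:ℝ) * aterm m (m/2) x := by
      rw [sum_Ico_eq_sum_range]
      have hre : ∀ i, (m:ℝ) * (aterm m (m/2 + 1 + i - 1) x - aterm m (m/2 + 1 + i) x)
          = (m:ℝ) * (aterm m (m/2 + i) x - aterm m (m/2 + (i+1)) x) := by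
        intro i
        congr 2 <;> congr 1 <;> omega
      rw [Finset.sum_congr rfl (fun i _ => hre i), ← Finset.mul_sum,
        Finset.sum_range_sub' (fun i => aterm m (m/2 + i) x)]
      have hm2 : m/2 + (m + 1 - (m/2 + 1)) = m := by omega
      rw [hm2]
      have hz : aterm m m x = 0 := by
        rw [aterm, Nat.choose_eq_zero_of_lt (show m - 1 < m by omega)]
        simp
      rw [hz]
      ring
    rw [← hval]
    exact hsum
  have hL : HasDerivAt (fun x => ∑ k ∈ range ((m+1)/2), bterm m k x)
      (-((m:ℝ) * aterm m ((m+1)/2 - 1) x)) x := by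
    have hN : (m+1)/2 = ((m+1)/2 - 1) + 1 := by omega
    set N := (m+1)/2 - 1 with hNdef
    rw [hN]
    have hsum : HasDerivAt (fun x => ∑ k ∈ range (N + 1), bterm m k x)
        ((∑ i ∈ range N, (m:ℝ) * (aterm m i x - aterm m (i+1) x)) + (-((m:ℝ) * aterm m 0 x))) x := by
      have heq : (fun x => ∑ k ∈ range (N + 1), bterm m k x)
          = (fun x => (∑ i ∈ range N, bterm m (i+1) x) + bterm m 0 x) := by
        funext y; exact Finset.sum_range_succ' (fun k => bterm m k y) N
      rw [heq]
      apply HasDerivAt.add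
      · apply HasDerivAt.fun_sum
        intro i hi
        rw [mem_range] at hi
        apply deriv_bterm_succ m i (by omega) x
      · exact deriv_bterm_zero m hm x
    have hval : (∑ i ∈ range N, (m:ℝ) * (aterm m i x - aterm m (i+1) x)) + (-((m:ℝ) * aterm m 0 x))
        = -((m:ℝ) * aterm m N x) := by
      rw [← Finset.mul_sum, Finset.sum_range_sub' (fun i => aterm m i x)]
      ring
    rw [← hval]
    exact hsum
  have := hT.fun_sub hL
  refine this.congr_deriv ?_
  ring

lemma key_lower (F : ℝ → ℝ) (c : ℝ) (E : ℕ) (φ θ : ℝ)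
    (hc : 0 ≤ c) (hφ : 0 < φ) (hφθ : φ ≤ θ) (hθ : θ ≤ 1/2)
    (hF : ∀ x, HasDerivAt F (c * (1/4 - x^2)^E) x) (hF0 : F 0 = 0) :
    c * ((φ/2) * ((1-φ^2)/4)^E) + c * ((Real.sqrt 2 - 1) * (φ/2) * ((1-2*φ^2)/4)^E) ≤ F θ := by
  set h : ℝ → ℝ := fun x => c * (1/4 - x^2)^E with hh
  have hcont : Continuous h := by
    apply Continuous.mul continuous_const
    exact (Continuous.pow (by continuity) E)
  have hInt : ∀ a b : ℝ, IntervalIntegrable h MeasureTheory.volume a b :=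
    fun a b => hcont.intervalIntegrable a b
  have hFθ : F θ = ∫ x in (0:ℝ)..θ, h x := by
    rw [intervalIntegral.integral_eq_sub_of_hasDerivAt (fun x _ => hF x) (hInt 0 θ), hF0, sub_zero]
  have hs2 : Real.sqrt 2 ^ 2 = 2 := Real.sq_sqrt (by norm_num)
  have hs2a : (1:ℝ) ≤ Real.sqrt 2 := by
    nlinarith [Real.sqrt_nonneg 2]
  have hs2b : Real.sqrt 2 ≤ 2 := by
    nlinarith [Real.sqrt_nonneg 2]
  set b1 := φ/2 with hb1def
  set b2 := Real.sqrt 2 * φ / 2 with hb2def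
  have hb1 : 0 ≤ b1 := by positivity
  have hb12 : b1 ≤ b2 := by rw [hb1def, hb2def]; nlinarith
  have hb2θ : b2 ≤ θ := by rw [hb2def]; nlinarith
  have hsplit : (∫ x in (0:ℝ)..θ, h x)
      = (∫ x in (0:ℝ)..b1, h x) + (∫ x in b1..b2, h x) + (∫ x in b2..θ, h x) := by
    rw [intervalIntegral.integral_add_adjacent_intervals (hInt 0 b1) (hInt b1 b2),
      intervalIntegral.integral_add_adjacent_intervals (hInt 0 b2) (hInt b2 θ)]
  have hrect : ∀ a b : ℝ, 0 ≤ a → a ≤ b → b ≤ 1/2 →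
      (b - a) * (c * (1/4 - b^2)^E) ≤ ∫ x in a..b, h x := by
    intro a b ha hab hb
    have := intervalIntegral.integral_mono_on (μ := MeasureTheory.volume)
      (f := fun _ : ℝ => c * (1/4 - b^2)^E) (g := h) hab
      (intervalIntegrable_const) (hInt a b) ?_
    · rw [intervalIntegral.integral_const] at this
      simpa [smul_eq_mul] using this
    · intro x hx
      rcases hx with ⟨hx1, hx2⟩
      have hx0 : 0 ≤ x := le_trans ha hx1
      have hbb : 1/4 - b^2 ≤ 1/4 - x^2 := by nlinarith
      have hbnn : 0 ≤ 1/4 - b^2 := by nlinarith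
      exact mul_le_mul_of_nonneg_left (pow_le_pow_left₀ hbnn hbb E) hc
  have h3 : 0 ≤ ∫ x in b2..θ, h x := by
    apply intervalIntegral.integral_nonneg hb2θ
    intro x hx
    rcases hx with ⟨hx1, hx2⟩
    have hx0 : 0 ≤ x := le_trans (by positivity) hx1
    have : 0 ≤ 1/4 - x^2 := by nlinarith
    positivity
  have h1 := hrect 0 b1 le_rfl hb1 (by rw [hb1def]; nlinarith)
  have h2 := hrect b1 b2 hb1 hb12 (le_trans hb2θ hθ)
  have e1 : 1/4 - b1^2 = (1-φ^2)/4 := by rw [hb1def]; ring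
  have e2 : 1/4 - b2^2 = (1-2*φ^2)/4 := by
    rw [hb2def]
    linear_combination (-(φ^2)/4) * hs2
  rw [e1] at h1
  rw [e2] at h2
  rw [hFθ, hsplit]
  have hd1 : (b1 - 0) = φ/2 := by rw [hb1def]; ring
  have hd2 : (b2 - b1) = (Real.sqrt 2 - 1) * (φ/2) := by rw [hb2def, hb1def]; ring
  rw [hd1] at h1
  rw [hd2] at h2
  rw [← hb1def] at h1 h2
  ring_nf at h1 h2 ⊢
  linarith [h1, h2, h3]

lemma bterm_nonneg (m k : ℕ) {x : ℝ} (h0 : 0 ≤ 1/2 + x) (h1 : 0 ≤ 1/2 - x) :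
    0 ≤ bterm m k x := by
  rw [bterm]; positivity

lemma bterm_sum_one (m : ℕ) (x : ℝ) : ∑ k ∈ range (m+1), bterm m k x = 1 := by
  have h := add_pow (1/2 + x) (1/2 - x) m
  have h2 : ((1/2 + x) + (1/2 - x)) ^ m = 1 := by norm_num
  rw [h2] at h
  rw [show ∑ k ∈ range (m+1), bterm m k x
    = ∑ k ∈ range (m+1), (1/2 + x)^k * (1/2 - x)^(m-k) * (m.choose k : ℝ) from
      Finset.sum_congr rfl (fun k _ => by rw [bterm]; ring)]
  exact h.symm

lemma Fgap_zero (m : ℕ) (hm : 1 ≤ m) : Fgap m 0 = 0 := by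
  rw [Fgap, sub_eq_zero]
  apply Finset.sum_nbij' (fun k => m - k) (fun k => m - k)
  · intro a ha; rw [mem_Ico] at ha; rw [mem_range]; omega
  · intro a ha; rw [mem_range] at ha; rw [mem_Ico]; omega
  · intro a ha; rw [mem_Ico] at ha; omega
  · intro a ha; rw [mem_range] at ha; omega
  · intro a ha
    rw [mem_Ico] at ha
    rw [bterm, bterm]
    have h1 : m.choose (m - a) = m.choose a := Nat.choose_symm (by omega)
    rw [h1]
    have h2 : m - (m - a) = a := by omega
    rw [h2]
    ring
lemma sqrt2_ge : (1.41 : ℝ) ≤ Real.sqrt 2 := by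
  nlinarith [Real.sq_sqrt (show (0:ℝ) ≤ 2 by norm_num), Real.sqrt_nonneg 2]

lemma sqrt_two_m (m : ℕ) (hm : 1 ≤ m) :
    Real.sqrt (2*m/π) = (m:ℝ) * Real.sqrt (2/(π*m)) := by
  have hm0 : (0:ℝ) < m := by exact_mod_cast hm
  have hpi := Real.pi_pos
  have h : (2*(m:ℝ)/π) = (m:ℝ)^2 * (2/(π*m)) := by field_simp
  rw [h, Real.sqrt_mul (by positivity), Real.sqrt_sq hm0.le]

lemma hasDerivAt_Fgap_odd (n : ℕ) (x : ℝ) :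
    HasDerivAt (Fgap (2*n+1)) ((2*(2*(n:ℝ)+1) * Nat.centralBinom n) * (1/4 - x^2)^n) x := by
  have h := hasDerivAt_Fgap (2*n+1) (by omega) x
  have e1 : (2*n+1)/2 = n := by omega
  have e2 : (2*n+1+1)/2 - 1 = n := by omega
  rw [e1, e2] at h
  convert h using 1
  rw [aterm]
  rw [show 2*n+1-1 = 2*n from rfl, show 2*n-n = n by omega]
  have hcb : ((2*n).choose n : ℝ) = (Nat.centralBinom n : ℝ) := by
    rw [Nat.centralBinom]
  rw [hcb]
  have hpq : (1/4 - x^2)^n = (1/2+x)^n * (1/2-x)^n := by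
    rw [← mul_pow]; congr 1; ring
  rw [hpq]
  push_cast
  ring

lemma hasDerivAt_Fgap_even (n : ℕ) (hn : 1 ≤ n) (x : ℝ) :
    HasDerivAt (Fgap (2*n)) ((2*(n:ℝ) * ((2*n-1).choose (n-1))) * (1/4 - x^2)^(n-1)) x := by
  have h := hasDerivAt_Fgap (2*n) (by omega) x
  have e1 : (2*n)/2 = n := by omega
  have e2 : (2*n+1)/2 - 1 = n - 1 := by omega
  rw [e1, e2] at h
  convert h using 1
  rw [aterm, aterm]
  have e3 : 2*n-1-n = n-1 := by omega
  have e4 : 2*n-1-(n-1) = n := by omega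
  rw [e3, e4]
  have hsymm : (2*n-1).choose n = (2*n-1).choose (n-1) := by
    have := Nat.choose_symm (show n ≤ 2*n-1 by omega)
    rw [show 2*n-1-n = n-1 by omega] at this
    exact this.symm
  rw [hsymm]
  have hpq : (1/4 - x^2)^(n-1) = (1/2+x)^(n-1) * (1/2-x)^(n-1) := by
    rw [← mul_pow]; congr 1; ring
  have hps : (1/2+x)^n = (1/2+x)^(n-1) * (1/2+x) := by
    rw [← pow_succ]; congr 1; omega
  have hqs : (1/2-x)^n = (1/2-x)^(n-1) * (1/2-x) := by
    rw [← pow_succ]; congr 1; omega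
  rw [hpq, hps, hqs]
  push_cast
  ring

set_option maxHeartbeats 4000000 in
lemma even_core (n : ℕ) (hn : 1 ≤ n) (u D : ℝ) (hu0 : 0 ≤ u) (hu4 : u ≤ 1/4)
    (hum : 2*(n:ℝ)*u ≤ 1) (hD : Real.sqrt (2/(π*(2*(n:ℝ)+1))) ≤ D) :
    Real.sqrt (2*(2*(n:ℝ))/π) * ((1-u)^(n-1) * Real.sqrt (1-u)) ≤
      2*(n:ℝ)*D*((1-u)^(n-1) + (Real.sqrt 2 - 1)*(1-2*u)^(n-1)) := by
  have hpi := Real.pi_pos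
  have hN : (1:ℝ) ≤ (n:ℝ) := by exact_mod_cast hn
  set N := (n:ℝ) with hNdef
  have h1u : (3:ℝ)/4 ≤ 1 - u := by linarith
  have h2u : (1:ℝ)/2 ≤ 1 - 2*u := by linarith
  have hs2 : Real.sqrt 2 ^ 2 = 2 := Real.sq_sqrt (by norm_num)
  have hs2a : (1.41:ℝ) ≤ Real.sqrt 2 := sqrt2_ge
  set y := u / (1-u) with hydef
  have hy0 : 0 ≤ y := by positivity
  have hy13 : y ≤ 1/3 := by
    rw [hydef, div_le_iff₀ (by linarith)]; linarith
  have hy1 : y * (2*N-1) ≤ 1 := by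
    rw [hydef, div_mul_eq_mul_div, div_le_one (by linarith)]
    nlinarith
  have hfac : 1 - 2*u = (1-u)*(1-y) := by
    rw [hydef]; field_simp; ring
  have Bern : 1 - ((n-1:ℕ):ℝ) * y ≤ (1-y)^(n-1) := by
    have h := one_add_mul_le_pow (a := -y) (by linarith) (n-1)
    calc 1 - ((n-1:ℕ):ℝ) * y = 1 + ((n-1:ℕ):ℝ) * (-y) := by ring
      _ ≤ (1 + -y)^(n-1) := h
      _ = (1-y)^(n-1) := by ring_nf
  have hcast : ((n-1:ℕ):ℝ) = N - 1 := by
    rw [Nat.cast_sub hn]; norm_num [hNdef]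
  rw [hcast] at Bern
  have hpow_nonneg : (0:ℝ) ≤ (1-u)^(n-1) := by positivity
  have hbr : (1-u)^(n-1) * (1 - (N-1)*y) ≤ (1-2*u)^(n-1) := by
    rw [hfac, mul_pow]
    exact mul_le_mul_of_nonneg_left Bern hpow_nonneg
  set K := 1 + (Real.sqrt 2 - 1) * (1 - (N-1)*y) with hKdef
  have hy1' : (N-1)*(y*(2*N-1)) ≤ (N-1) := by
    nlinarith [hy1, hy0]
  have hK1 : 1 ≤ K := by
    rw [hKdef]
    nlinarith [hy1', hs2a, hy0]
  have hKge : (2*N-1) + (Real.sqrt 2 - 1)*N ≤ K*(2*N-1) := by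
    rw [hKdef]
    nlinarith [hy1', hs2a]
  have ht : (0.41:ℝ) ≤ Real.sqrt 2 - 1 := by linarith
  have hq : (0:ℝ) ≤ 1.64*N^2 - (2*N-1) := by nlinarith [sq_nonneg (N-1)]
  have hb0 : (0:ℝ) ≤ (2*N-1) + (Real.sqrt 2 - 1)*N := by nlinarith
  have hkey : 2*N+1 ≤ 2*N*K^2 := by
    have hKsq : ((2*N-1) + (Real.sqrt 2 - 1)*N) * ((2*N-1) + (Real.sqrt 2 - 1)*N)
        ≤ (K*(2*N-1)) * (K*(2*N-1)) := mul_self_le_mul_self hb0 hKge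
    have p1 : (2*N+1)*(2*N-1)^2 ≤ 2*N*((2*N-1) + (Real.sqrt 2-1)*N)^2 := by
      nlinarith [mul_nonneg (show (0:ℝ) ≤ 2*N-1 by linarith) hq,
        mul_nonneg (mul_nonneg (show (0:ℝ) ≤ N^2 by positivity)
          (show (0:ℝ) ≤ 2*N-1 by linarith)) (show (0:ℝ) ≤ Real.sqrt 2 - 1 - 0.41 by linarith),
        mul_nonneg (sq_nonneg (Real.sqrt 2 - 1)) (show (0:ℝ) ≤ N^3 by positivity)]
    have hchain : (2*N+1)*(2*N-1)^2 ≤ (2*N*K^2)*(2*N-1)^2 := by nlinarith [p1, hKsq]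
    exact le_of_mul_le_mul_right hchain (by nlinarith)
  set A := Real.sqrt (2/(π*(2*N+1))) with hAdef
  have hA0 : 0 ≤ A := Real.sqrt_nonneg _
  have hA2 : A^2 = 2/(π*(2*N+1)) := Real.sq_sqrt (by positivity)
  have hsqA : (2*N*A*K)^2 = (8*N^2*K^2)/(π*(2*N+1)) := by
    rw [show (2*N*A*K)^2 = 4*N^2*K^2*A^2 by ring, hA2]; ring
  have h1 : 2*(2*N)/π ≤ (2*N*A*K)^2 := by
    rw [hsqA, div_le_div_iff₀ hpi (by positivity)]
    nlinarith [mul_le_mul_of_nonneg_left hkey (show (0:ℝ) ≤ 4*N*π by positivity)]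
  have hmainA : Real.sqrt (2*(2*N)/π) ≤ 2*N*A*K := by
    calc Real.sqrt (2*(2*N)/π) ≤ Real.sqrt ((2*N*A*K)^2) := Real.sqrt_le_sqrt h1
      _ = 2*N*A*K := Real.sqrt_sq (by positivity)
  have hmain : Real.sqrt (2*(2*N)/π) ≤ 2*N*D*K := by
    calc Real.sqrt (2*(2*N)/π) ≤ 2*N*A*K := hmainA
      _ ≤ 2*N*D*K :=
          mul_le_mul_of_nonneg_right
            (mul_le_mul_of_nonneg_left hD (by linarith : (0:ℝ) ≤ 2*N))
            (by linarith : (0:ℝ) ≤ K)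
  have hsu : Real.sqrt (1-u) ≤ 1 := by
    have h' := Real.sqrt_le_sqrt (show 1-u ≤ 1 by linarith)
    simpa using h'
  have hKbr : (1-u)^(n-1) * K ≤ (1-u)^(n-1) + (Real.sqrt 2 - 1)*(1-2*u)^(n-1) := by
    rw [hKdef]
    have h' := mul_le_mul_of_nonneg_left hbr (show (0:ℝ) ≤ Real.sqrt 2 - 1 by linarith)
    nlinarith [h']
  have hD0 : 0 ≤ D := le_trans hA0 hD
  calc Real.sqrt (2*(2*N)/π) * ((1-u)^(n-1) * Real.sqrt (1-u))
      ≤ Real.sqrt (2*(2*N)/π) * (1-u)^(n-1) := by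
        apply mul_le_mul_of_nonneg_left _ (Real.sqrt_nonneg _)
        nlinarith [hsu, hpow_nonneg, Real.sqrt_nonneg (1-u)]
    _ ≤ (2*N*D*K) * (1-u)^(n-1) := by
        apply mul_le_mul_of_nonneg_right hmain hpow_nonneg
    _ = (2*N*D) * ((1-u)^(n-1) * K) := by ring
    _ ≤ 2*N*D*((1-u)^(n-1) + (Real.sqrt 2 - 1)*(1-2*u)^(n-1)) := by
        apply mul_le_mul_of_nonneg_left hKbr (by positivity)

lemma analytic_core (m : ℕ) (hm : 1 ≤ m) (θ φ : ℝ) (hφ0 : 0 < φ) (hφθ : φ ≤ θ)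
    (hθ12 : θ ≤ 1/2) (hφ12 : φ ≤ 1/2) (hφm : (m:ℝ)*φ^2 ≤ 1) :
    Real.sqrt (2*m/π) * (φ * (1-φ^2) ^ (((m:ℝ)-1)/2)) ≤ Fgap m θ := by
  have hu0 : (0:ℝ) ≤ φ^2 := sq_nonneg φ
  have hu4 : φ^2 ≤ 1/4 := by nlinarith
  have h1u : (0:ℝ) < 1 - φ^2 := by nlinarith
  have h2u : (0:ℝ) ≤ 1 - 2*φ^2 := by nlinarith
  have hs21 : (0:ℝ) ≤ Real.sqrt 2 - 1 := by linarith [sqrt2_ge]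
  rcases Nat.even_or_odd m with he | ho
  · -- even, m = 2n
    obtain ⟨n', hn'⟩ := he
    have hn : 1 ≤ n' := by omega
    have hmn : m = 2*n' := by omega
    subst hmn
    set n := n' with hndef
    have hCb := centralBinom_lower n
    have hum : 2*(n:ℝ)*φ^2 ≤ 1 := by
      have : ((2*n:ℕ):ℝ) = 2*(n:ℝ) := by push_cast; ring
      rw [this] at hφm; exact hφm
    have hec := even_core n hn (φ^2) ((Nat.centralBinom n:ℝ)/4^n) hu0 hu4 hum hCb
    have hCC : Nat.centralBinom n = 2 * ((2*n-1).choose (n-1)) := by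
      have h1 : Nat.centralBinom n = (2*n).choose n := rfl
      have h2 := Nat.choose_succ_succ (2*n-1) (n-1)
      simp only [Nat.succ_eq_add_one] at h2
      have e1 : (2*n-1) + 1 = 2*n := by omega
      have e2 : (n-1) + 1 = n := by omega
      rw [e1, e2] at h2
      have h3 : (2*n-1).choose n = (2*n-1).choose (n-1) := by
        have h4 := Nat.choose_symm (show n ≤ 2*n-1 by omega)
        rw [show 2*n-1-n = n-1 by omega] at h4
        exact h4.symm
      omega
    have hCCR : (Nat.centralBinom n : ℝ) = 2*(((2*n-1).choose (n-1) : ℕ):ℝ) := by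
      exact_mod_cast congrArg (Nat.cast (R := ℝ)) hCC
    have hc : (0:ℝ) ≤ 2*(n:ℝ) * ((2*n-1).choose (n-1)) := by positivity
    have key := key_lower (Fgap (2*n)) (2*(n:ℝ) * ((2*n-1).choose (n-1))) (n-1) φ θ
      hc hφ0 hφθ hθ12 (fun x => hasDerivAt_Fgap_even n hn x) (Fgap_zero (2*n) (by omega))
    have he' : (((2*n:ℕ):ℝ)-1)/2 = ((n-1:ℕ):ℝ) + 1/2 := by
      rw [Nat.cast_sub hn]
      push_cast
      ring
    rw [he', Real.rpow_add h1u, Real.rpow_natCast, ← Real.sqrt_eq_rpow]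
    calc Real.sqrt (2*((2*n:ℕ):ℝ)/π) * (φ * ((1-φ^2)^(n-1) * Real.sqrt (1-φ^2)))
        = φ * (Real.sqrt (2*(2*(n:ℝ))/π) * ((1-φ^2)^(n-1) * Real.sqrt (1-φ^2))) := by
          push_cast; ring
      _ ≤ φ * (2*(n:ℝ)*((Nat.centralBinom n:ℝ)/4^n)*((1-φ^2)^(n-1)
            + (Real.sqrt 2 - 1)*(1-2*φ^2)^(n-1))) := mul_le_mul_of_nonneg_left hec hφ0.le
      _ = (2*(n:ℝ) * ((2*n-1).choose (n-1))) * ((φ/2)*((1-φ^2)/4)^(n-1))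
            + (2*(n:ℝ) * ((2*n-1).choose (n-1))) * ((Real.sqrt 2 - 1)*(φ/2)*((1-2*φ^2)/4)^(n-1)) := by
          rw [div_pow, div_pow, hCCR,
            show (4:ℝ)^n = 4^(n-1)*4 by rw [← pow_succ]; congr 1; omega]
          have h4 : (4:ℝ)^(n-1) ≠ 0 := by positivity
          field_simp
          ring
      _ ≤ Fgap (2*n) θ := key
  · -- odd, m = 2n+1
    obtain ⟨n, hmn⟩ := ho
    subst hmn
    have hCb := centralBinom_lower n
    have hc : (0:ℝ) ≤ 2*(2*(n:ℝ)+1) * Nat.centralBinom n := by positivity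
    have key := key_lower (Fgap (2*n+1)) (2*(2*(n:ℝ)+1) * Nat.centralBinom n) n φ θ
      hc hφ0 hφθ hθ12 (fun x => hasDerivAt_Fgap_odd n x) (Fgap_zero (2*n+1) (by omega))
    have he' : (((2*n+1:ℕ):ℝ)-1)/2 = ((n:ℕ):ℝ) := by push_cast; ring
    rw [he', Real.rpow_natCast]
    have hterm2 : 0 ≤ (2*(2*(n:ℝ)+1) * Nat.centralBinom n)
        * ((Real.sqrt 2 - 1)*(φ/2)*((1-2*φ^2)/4)^n) := by
      apply mul_nonneg hc
      apply mul_nonneg (mul_nonneg hs21 (by positivity)) (by positivity)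
    have hms := sqrt_two_m (2*n+1) (by omega)
    have hmcast : ((2*n+1:ℕ):ℝ) = 2*(n:ℝ)+1 := by push_cast; ring
    calc Real.sqrt (2*((2*n+1:ℕ):ℝ)/π) * (φ * (1-φ^2)^n)
        = (2*(n:ℝ)+1) * Real.sqrt (2/(π*(2*(n:ℝ)+1))) * (φ * (1-φ^2)^n) := by
          rw [hms, hmcast]
      _ ≤ (2*(n:ℝ)+1) * ((Nat.centralBinom n:ℝ)/4^n) * (φ * (1-φ^2)^n) := by
          apply mul_le_mul_of_nonneg_right
            (mul_le_mul_of_nonneg_left hCb (by positivity)) (by positivity)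
      _ = (2*(2*(n:ℝ)+1) * Nat.centralBinom n) * ((φ/2)*((1-φ^2)/4)^n) := by
          rw [div_pow]
          have h4 : (4:ℝ)^n ≠ 0 := by positivity
          field_simp
      _ ≤ (2*(2*(n:ℝ)+1) * Nat.centralBinom n) * ((φ/2)*((1-φ^2)/4)^n)
            + (2*(2*(n:ℝ)+1) * Nat.centralBinom n)
              * ((Real.sqrt 2 - 1)*(φ/2)*((1-2*φ^2)/4)^n) := le_add_of_nonneg_right hterm2
      _ ≤ Fgap (2*n+1) θ := key
theorem biased_binomial_majority_gap
    {Ω : Type*} [MeasurableSpace Ω] (μ : Measure Ω) [IsProbabilityMeasure μ]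
    (m : ℕ) (hm : 1 ≤ m) (θ : ℝ) (hθ0 : 0 < θ) (hθ1 : θ ≤ 1 / 2)
    (B : Ω → ℕ)
    (hB : ∀ k : ℕ, μ {ω | B ω = k} =
      ENNReal.ofReal ((m.choose k : ℝ) * (1 / 2 + θ) ^ k * (1 / 2 - θ) ^ (m - k)))
    (g : ℝ)
    (hg : g = if θ < 1 / Real.sqrt m
      then θ * (1 - θ ^ 2) ^ (((m : ℝ) - 1) / 2)
      else (1 / Real.sqrt m) * (1 - 1 / (m : ℝ)) ^ (((m : ℝ) - 1) / 2)) :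
    (μ {ω | (m : ℝ) / 2 < (B ω : ℝ)}).toReal - (μ {ω | (B ω : ℝ) < (m : ℝ) / 2}).toReal ≥
      Real.sqrt (2 * m / Real.pi) * g := by
  classical
  have hpq0 : ∀ k, 0 ≤ bterm m k θ := fun k => bterm_nonneg m k (by linarith) (by linarith)
  have hBt : ∀ k : ℕ, μ {ω | B ω = k} = ENNReal.ofReal (bterm m k θ) := by
    intro k; rw [hB k, bterm]
  set S1 := {ω | (m:ℝ)/2 < (B ω:ℝ)} with hS1
  set S2 := {ω | (B ω:ℝ) < (m:ℝ)/2} with hS2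
  set A3 := ∑ k ∈ range (m/2+1), bterm m k θ with hA3
  set A2 := ∑ k ∈ range ((m+1)/2), bterm m k θ with hA2
  have hA3nn : 0 ≤ A3 := Finset.sum_nonneg (fun k _ => hpq0 k)
  have hA2nn : 0 ≤ A2 := Finset.sum_nonneg (fun k _ => hpq0 k)
  have hcover : ∀ (N : ℕ) (S : Set Ω), (∀ ω ∈ S, B ω < N) →
      μ S ≤ ENNReal.ofReal (∑ k ∈ range N, bterm m k θ) := by
    intro N S hS
    have hsub : S ⊆ ⋃ k ∈ range N, {ω | B ω = k} := by
      intro ω hω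
      simp only [Set.mem_iUnion, Set.mem_setOf_eq, mem_range]
      exact ⟨B ω, hS ω hω, rfl⟩
    calc μ S ≤ μ (⋃ k ∈ range N, {ω | B ω = k}) := measure_mono hsub
      _ ≤ ∑ k ∈ range N, μ {ω | B ω = k} := measure_biUnion_finset_le _ _
      _ = ∑ k ∈ range N, ENNReal.ofReal (bterm m k θ) :=
          Finset.sum_congr rfl (fun k _ => hBt k)
      _ = ENNReal.ofReal (∑ k ∈ range N, bterm m k θ) :=
          (ENNReal.ofReal_sum_of_nonneg (fun k _ => hpq0 k)).symm
  have hm3 : μ S1ᶜ ≤ ENNReal.ofReal A3 := by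
    apply hcover
    intro ω hω
    simp only [hS1, Set.mem_compl_iff, Set.mem_setOf_eq, not_lt] at hω
    have : 2*(B ω) ≤ m := by exact_mod_cast (by linarith : 2*((B ω):ℝ) ≤ (m:ℝ))
    omega
  have hm2 : μ S2 ≤ ENNReal.ofReal A2 := by
    apply hcover
    intro ω hω
    simp only [hS2, Set.mem_setOf_eq] at hω
    have : 2*(B ω) < m := by exact_mod_cast (by linarith : 2*((B ω):ℝ) < (m:ℝ))
    omega
  have huniv : (1:ENNReal) ≤ μ S1 + μ S1ᶜ := by
    rw [← measure_univ (μ := μ)]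
    have : (Set.univ : Set Ω) ⊆ S1 ∪ S1ᶜ := by
      intro ω _
      by_cases h : ω ∈ S1
      · exact Or.inl h
      · exact Or.inr h
    exact le_trans (measure_mono this) (measure_union_le S1 S1ᶜ)
  have hfin1 : μ S1 ≠ ⊤ := measure_ne_top μ S1
  have h1R : (1:ℝ) ≤ (μ S1).toReal + A3 := by
    have hle : (1:ENNReal) ≤ μ S1 + ENNReal.ofReal A3 :=
      le_trans huniv (add_le_add le_rfl hm3)
    have := ENNReal.toReal_mono (by finiteness) hle
    rwa [ENNReal.toReal_add hfin1 ENNReal.ofReal_ne_top, ENNReal.toReal_one,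
      ENNReal.toReal_ofReal hA3nn] at this
  have h2R : (μ S2).toReal ≤ A2 := by
    have := ENNReal.toReal_mono ENNReal.ofReal_ne_top hm2
    rwa [ENNReal.toReal_ofReal hA2nn] at this
  have hsum1 : A3 + (∑ k ∈ Ico (m/2+1) (m+1), bterm m k θ) = 1 := by
    rw [hA3, Finset.sum_range_add_sum_Ico _ (by omega : m/2+1 ≤ m+1)]
    exact bterm_sum_one m θ
  have hgap : Fgap m θ ≤ (μ S1).toReal - (μ S2).toReal := by
    rw [Fgap]
    have : (∑ k ∈ Ico (m/2+1) (m+1), bterm m k θ) = 1 - A3 := by linarith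
    rw [this]
    linarith
  -- now the analytic bound
  have hmR : (1:ℝ) ≤ (m:ℝ) := by exact_mod_cast hm
  have hsm : 0 < Real.sqrt m := Real.sqrt_pos.2 (by linarith)
  have hsmsq : (1/Real.sqrt m)^2 = 1/(m:ℝ) := by
    rw [div_pow, one_pow, Real.sq_sqrt (by linarith : (0:ℝ) ≤ m)]
  set φ := min θ (1/Real.sqrt m) with hφdef
  have hφ0 : 0 < φ := lt_min hθ0 (by positivity)
  have hφθ : φ ≤ θ := min_le_left _ _
  have hφ12 : φ ≤ 1/2 := le_trans hφθ hθ1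
  have hφsm : φ ≤ 1/Real.sqrt m := min_le_right _ _
  have hφm : (m:ℝ)*φ^2 ≤ 1 := by
    have h1 : φ^2 ≤ (1/Real.sqrt m)^2 := pow_le_pow_left₀ hφ0.le hφsm 2
    rw [hsmsq] at h1
    calc (m:ℝ)*φ^2 ≤ (m:ℝ)*(1/(m:ℝ)) := mul_le_mul_of_nonneg_left h1 (by linarith)
      _ = 1 := by field_simp
  have hgφ : g = φ * (1-φ^2) ^ (((m:ℝ)-1)/2) := by
    by_cases hcase : θ < 1/Real.sqrt m
    · rw [hg, if_pos hcase, hφdef, min_eq_left hcase.le]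
    · rw [hg, if_neg hcase, hφdef, min_eq_right (le_of_not_gt hcase), hsmsq]
  have hcore := analytic_core m hm θ φ hφ0 hφθ hθ1 hφ12 hφm
  rw [ge_iff_le, hgφ]
  calc Real.sqrt (2*m/π) * (φ * (1-φ^2) ^ (((m:ℝ)-1)/2)) ≤ Fgap m θ := hcore
    _ ≤ (μ S1).toReal - (μ S2).toReal := hgap
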